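/- Let γ ∈ GR(4, 4^ℓ) be a primitive pq-th root of unity. For every i with 0 ≤ i < 4 and every k with 0 ≤ k < q, one has D_i(γ^{kp}) = 0 in GR(4, 4^ℓ). -/

import Mathlib

lemma aux_pow_modEq {M : Type*} [Monoid M] {x : M} (hx : IsOfFinOrder x) {m m' : ℕ}
    (hxy : x ^ m = x ^ m') : m ≡ m' [MOD orderOf x] := by
  obtain ⟨u, hu⟩ := hx.isUnit
  have hu' : u ^ m = u ^ m' := Units.ext (by simp [hu, hxy])
  have := pow_eq_pow_iff_modEq.mp hu'
  rwa [← orderOf_units, hu] at this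

theorem stmt4
    (p q : ℕ) (hp : Nat.Prime p) (hq : Nat.Prime q) (hne : p ≠ q)
    (hpo : Odd p) (hqo : Odd q)
    (hgcd : Nat.gcd (p - 1) (q - 1) = 4)
    (e : ℕ) (he : e = (p - 1) * (q - 1) / 4)
    (g h : ℕ)
    (hgp : orderOf (g : ZMod p) = p - 1)
    (hgq : orderOf (g : ZMod q) = q - 1)
    (hhp : (h : ZMod p) = (g : ZMod p))
    (hhq : (h : ZMod q) = 1)
    (D : ℕ → Finset (ZMod (p * q)))
    (hD : ∀ i, D i = (Finset.range (e / 4) ×ˢ Finset.range 4).image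
        (fun sj => (g : ZMod (p * q)) ^ (4 * sj.1 + i) * (h : ZMod (p * q)) ^ sj.2))
    (ℓ : ℕ) (γ : TruncatedWittVector 2 2 (GaloisField 2 ℓ))
    (hγu : IsUnit γ) (hγo : orderOf γ = p * q)
 :
    ∀ i < 4, ∀ k < q, ∑ u ∈ D i, (γ ^ (k * p)) ^ u.val = 0 := by
  intro i _ k _
  haveI : Fact p.Prime := ⟨hp⟩
  haveI : Fact q.Prime := ⟨hq⟩
  haveI : NeZero (p * q) := ⟨Nat.mul_ne_zero hp.pos.ne' hq.pos.ne'⟩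
  -- 4 = 0 in R
  have h4 : (4 : TruncatedWittVector 2 2 (GaloisField 2 ℓ)) = 0 := by
    have h2 : ((2 : ℕ) : TruncatedWittVector 2 2 (GaloisField 2 ℓ)) ^ 2 = 0 := by
      have ht : ((2 : ℕ) : TruncatedWittVector 2 2 (GaloisField 2 ℓ)) ^ 2
          = WittVector.truncate (p := 2) 2 (((2 : ℕ) : WittVector 2 (GaloisField 2 ℓ)) ^ 2) := by
        rw [map_pow, map_natCast]
      rw [ht]
      ext j
      rw [WittVector.coeff_truncate, TruncatedWittVector.coeff_zero]
      exact WittVector.coeff_p_pow_eq_zero 2 _ (Nat.ne_of_lt j.2)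
    have : ((2 : ℕ) : TruncatedWittVector 2 2 (GaloisField 2 ℓ)) ^ 2 = (4 : TruncatedWittVector 2 2 (GaloisField 2 ℓ)) := by norm_num
    rw [this] at h2
    exact h2
  have hβq : (γ ^ (k * p)) ^ q = 1 := by
    have hkp : k * p * q = p * q * k := by ring
    rw [← pow_mul, hkp, pow_mul, ← hγo, pow_orderOf_eq_one, one_pow]
  -- arithmetic facts
  have h4p : (4 : ℕ) ∣ p - 1 := hgcd ▸ Nat.gcd_dvd_left _ _
  have h4q : (4 : ℕ) ∣ q - 1 := hgcd ▸ Nat.gcd_dvd_right _ _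
  obtain ⟨a, ha⟩ := h4p
  obtain ⟨b, hb⟩ := h4q
  have hpe : 2 ≤ p := hp.two_le
  have hqe : 2 ≤ q := hq.two_le
  have he4 : e / 4 = a * b := by
    have : e = 4 * (a * b) := by
      rw [he, ha, hb]
      have h16 : 4 * a * (4 * b) = 4 * (4 * (a * b)) := by ring
      rw [h16, Nat.mul_div_cancel_left _ (show 0 < 4 by norm_num)]
    omega
  have hlcm : Nat.lcm (p - 1) (q - 1) = 4 * (a * b) := by
    have h1 := Nat.gcd_mul_lcm (p - 1) (q - 1)
    rw [hgcd] at h1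
    have h16 : (p - 1) * (q - 1) = 4 * (4 * (a * b)) := by rw [ha, hb]; ring
    rw [h16] at h1
    exact Nat.eq_of_mul_eq_mul_left (show 0 < 4 by norm_num) h1
  -- finite order of g mod p and mod q
  have hfinp : IsOfFinOrder (g : ZMod p) := orderOf_pos_iff.mp (by rw [hgp]; omega)
  have hfinq : IsOfFinOrder (g : ZMod q) := orderOf_pos_iff.mp (by rw [hgq]; omega)
  -- injectivity
  have hinj : Set.InjOn
      (fun sj : ℕ × ℕ => (g : ZMod (p * q)) ^ (4 * sj.1 + i) * (h : ZMod (p * q)) ^ sj.2)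
      ((Finset.range (e / 4) ×ˢ Finset.range 4) : Finset (ℕ × ℕ)) := by
    rintro ⟨s, j⟩ hsj ⟨s', j'⟩ hsj' heq
    simp only [Finset.coe_product, Finset.coe_range, Set.mem_prod, Set.mem_Iio] at hsj hsj'
    simp only at heq
    have hq_eq : (g : ZMod q) ^ (4 * s + i) = (g : ZMod q) ^ (4 * s' + i) := by
      have := congrArg (ZMod.castHom (dvd_mul_left q p) (ZMod q)) heq
      simpa [map_mul, map_pow, map_natCast, hhq] using this
    have hp_eq : (g : ZMod p) ^ (4 * s + i + j) = (g : ZMod p) ^ (4 * s' + i + j') := by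
      have := congrArg (ZMod.castHom (dvd_mul_right p q) (ZMod p)) heq
      simpa [map_mul, map_pow, map_natCast, hhp, ← pow_add] using this
    have hmq : 4 * s + i ≡ 4 * s' + i [MOD q - 1] := by
      have := aux_pow_modEq hfinq hq_eq
      rwa [hgq] at this
    have hmp : 4 * s + i + j ≡ 4 * s' + i + j' [MOD p - 1] := by
      have := aux_pow_modEq hfinp hp_eq
      rwa [hgp] at this
    have hmp4 : 4 * s + i + j ≡ 4 * s' + i + j' [MOD 4] := hmp.of_dvd ⟨a, ha⟩
    have hjj : j = j' := by
      have := hmp4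
      unfold Nat.ModEq at this
      omega
    subst hjj
    have hmp' : 4 * s ≡ 4 * s' [MOD p - 1] :=
      Nat.ModEq.add_right_cancel' _ (Nat.ModEq.add_right_cancel' _
        (by simpa [add_assoc] using hmp))
    have hmq' : 4 * s ≡ 4 * s' [MOD q - 1] :=
      Nat.ModEq.add_right_cancel' _ hmq
    have hss : s = s' := by
      rcases le_total s s' with hle | hle
      · have hd1 : (p - 1) ∣ 4 * s' - 4 * s :=
          (Nat.modEq_iff_dvd' (by omega)).mp hmp'
        have hd2 : (q - 1) ∣ 4 * s' - 4 * s :=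
          (Nat.modEq_iff_dvd' (by omega)).mp hmq'
        have hdl : Nat.lcm (p - 1) (q - 1) ∣ 4 * s' - 4 * s := Nat.lcm_dvd hd1 hd2
        rw [hlcm] at hdl
        have hlt : 4 * s' - 4 * s < 4 * (a * b) := by
          have := hsj'.1
          rw [he4] at this
          omega
        have := Nat.eq_zero_of_dvd_of_lt hdl hlt |>.symm
        omega
      · have hd1 : (p - 1) ∣ 4 * s - 4 * s' :=
          (Nat.modEq_iff_dvd' (by omega)).mp hmp'.symm
        have hd2 : (q - 1) ∣ 4 * s - 4 * s' :=
          (Nat.modEq_iff_dvd' (by omega)).mp hmq'.symm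
        have hdl : Nat.lcm (p - 1) (q - 1) ∣ 4 * s - 4 * s' := Nat.lcm_dvd hd1 hd2
        rw [hlcm] at hdl
        have hlt : 4 * s - 4 * s' < 4 * (a * b) := by
          have := hsj.1
          rw [he4] at this
          omega
        have := Nat.eq_zero_of_dvd_of_lt hdl hlt |>.symm
        omega
    subst hss
    rfl
  -- value of the summand depends only on s
  have key : ∀ s j : ℕ,
      (γ ^ (k * p)) ^ (((g : ZMod (p * q)) ^ (4 * s + i) * (h : ZMod (p * q)) ^ j).val)
        = (γ ^ (k * p)) ^ (((g : ZMod q) ^ (4 * s + i)).val) := by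
    intro s j
    set u := (g : ZMod (p * q)) ^ (4 * s + i) * (h : ZMod (p * q)) ^ j with hu
    have h1 : ((u.val : ℕ) : ZMod q) = (g : ZMod q) ^ (4 * s + i) := by
      have h2 : ((u.val : ℕ) : ZMod q) = ZMod.castHom (dvd_mul_left q p) (ZMod q) u := by
        rw [ZMod.castHom_apply, ZMod.natCast_val]
      rw [h2, hu]
      simp [map_mul, map_pow, map_natCast, hhq]
    have hval : u.val % q = ((g : ZMod q) ^ (4 * s + i)).val := by
      have := congrArg ZMod.val h1
      rwa [ZMod.val_natCast] at this
    conv_lhs => rw [← Nat.div_add_mod u.val q]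
    rw [pow_add, pow_mul, hβq, one_pow, one_mul, hval]
  rw [hD i, Finset.sum_image (fun x hx y hy hxy => hinj hx hy hxy), Finset.sum_product]
  simp only [key]
  refine Finset.sum_eq_zero fun s _ => ?_
  rw [Finset.sum_const, Finset.card_range, nsmul_eq_mul]
  have h44 : ((4 : ℕ) : TruncatedWittVector 2 2 (GaloisField 2 ℓ))
      = (4 : TruncatedWittVector 2 2 (GaloisField 2 ℓ)) := by norm_num
  rw [h44, h4, zero_mul]
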